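/- If 0 < t1 < t1' < 1/4 then t_{0,crit}(t1') < t_{0,crit}(t1); that is, the function t1 ↦ t_{0,crit}(t1) is strictly decreasing on the interval (0, 1/4). -/

import Mathlib

set_option maxHeartbeats 1000000

noncomputable section

/-- The cubic polynomial `p1` whose greatest real root is `t_{0,crit}(t1)`. -/
def p1 (t1 s : ℝ) : ℝ :=
  8192*s^3 + 192*(64*t1 - 7)*s^2 - 48*(1 - 4*t1)^2*s + (108*t1 - 11)*(4*t1 - 1)^3

lemma p1_big {t s : ℝ} (ht0 : 0 < t) (ht4 : t < 1/4) (hs : 1 ≤ s) : 0 < p1 t s := by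
  unfold p1
  have h1 : s^2 ≤ s^3 := by nlinarith
  have h2 : s ≤ s^2 := by nlinarith
  have h3 : 0 < (1-4*t) := by linarith
  have h4 : (1-4*t)^3 ≤ 1 := by nlinarith [sq_nonneg (1-4*t), mul_pos h3 h3]
  have h5 : 0 < (1-4*t)^3 := by positivity
  have h6 : (108*t - 11)*(4*t-1)^3 ≥ -16 := by
    rcases le_or_gt (108*t) 11 with h | h
    · nlinarith
    · nlinarith
  nlinarith [sq_nonneg s]

lemma lt_of_neg {t x tc : ℝ} (ht0 : 0 < t) (ht4 : t < 1/4)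
    (htc : IsGreatest {s : ℝ | p1 t s = 0} tc) (hx : p1 t x < 0) : x < tc := by
  set X := max x 1 + 1 with hXdef
  have hX1 : 1 ≤ X := by
    have := le_max_right x 1
    simp only [hXdef]; linarith
  have hxX : x < X := by
    have := le_max_left x 1
    simp only [hXdef]; linarith
  have hcont : ContinuousOn (fun s => p1 t s) (Set.Icc x X) := by
    unfold p1; fun_prop
  have h0 : (0:ℝ) ∈ Set.Ioo (p1 t x) (p1 t X) := ⟨hx, p1_big ht0 ht4 hX1⟩
  obtain ⟨r, hrmem, hfr⟩ := intermediate_value_Ioo hxX.le hcont h0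
  have hrtc : r ≤ tc := htc.2 hfr
  exact lt_of_lt_of_le hrmem.1 hrtc

lemma p1_pos_of_gt {t tc : ℝ} (ht0 : 0 < t) (ht4 : t < 1/4)
    (htc : IsGreatest {s : ℝ | p1 t s = 0} tc) : ∀ s, tc < s → 0 < p1 t s := by
  intro s hs
  rcases lt_trichotomy (p1 t s) 0 with h | h | h
  · exact absurd (lt_of_neg ht0 ht4 htc h) (by linarith)
  · exact absurd (htc.2 h) (by linarith)
  · exact h

/-- Core branch inequality: on the relevant branch of the root curve, `u^2 ≤ w` (`w = 8c`). -/
lemma core1 {u w : ℝ} (hu0 : 0 < u) (hu1 : u < 1) (hw0 : 0 < w)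
    (hP1 : 0 < 1 - 2*u + w)
    (hC : 27*u^4 + 16*w^3 - 48*u*w^2 - 6*u^2*w - 16*u^3 + 27*w^2 = 0) :
    u^2 ≤ w := by
  by_contra hneg
  push_neg at hneg  -- w < u^2
  have hwu : w < u := by nlinarith
  have hg : w^2 + w*u^2 - 2*u*w + u^4 - 2*u^3 < 0 := by
    nlinarith [mul_pos hw0 (by linarith : 0 < u^2 - w), mul_pos (mul_pos hu0 hw0) (by linarith : 0 < 1 - u),
      mul_pos (mul_pos hu0 hu0) hu0]
  have hP2 : 0 < u^4 - 2*u*w^2 + w^3 := by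
    nlinarith [mul_pos_of_neg_of_neg (by linarith : w - u^2 < 0) hg, sq_nonneg (u^2*(1-u))]
  have key : 27*(1-2*u+w)*(u^4-2*u*w^2+w^3)
      = (w-u)^3*(11*w+5*u) + (w-2*u)*(27*u^4 + 16*w^3 - 48*u*w^2 - 6*u^2*w - 16*u^3 + 27*w^2) := by
    ring
  rw [hC, mul_zero, add_zero] at key
  have hL : 0 < 27*(1-2*u+w)*(u^4-2*u*w^2+w^3) :=
    mul_pos (mul_pos (by norm_num) hP1) hP2
  have hR : (w-u)^3*(11*w+5*u) < 0 := by
    have h1 : (w-u)^3 < 0 := Odd.pow_neg (by decide) (by linarith : w - u < 0)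
    have h2 : 0 < 11*w+5*u := by linarith
    exact mul_neg_of_neg_of_pos h1 h2
  linarith

/-- The function `t1 ↦ t_{0,crit}(t1)` is strictly decreasing on `(0, 1/4)`:
if `0 < t1 < t1' < 1/4` and `tc`, `tc'` are the greatest real roots of `p1` for the
parameters `t1`, `t1'` respectively, then `tc' < tc`. -/
theorem t0crit_strictly_decreasing (t1 t1' tc tc' : ℝ)
    (ht1 : 0 < t1) (h12 : t1 < t1') (ht1' : t1' < 1/4)
    (htc : IsGreatest {s : ℝ | p1 t1 s = 0} tc)
    (htc' : IsGreatest {s : ℝ | p1 t1' s = 0} tc') :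
    tc' < tc := by
  have ht14 : t1 < 1/4 := by linarith
  have ht1'0 : 0 < t1' := by linarith
  have hroot : p1 t1 tc = 0 := htc.1
  have hroot' : p1 t1' tc' = 0 := htc'.1
  have hcube : 0 < t1^3 := by positivity
  -- Step 1: basic bounds on tc
  have hneg18 : t1 ≤ 9/64 → p1 t1 (1/8 - t1) < 0 := by
    intro h
    have he : p1 t1 (1/8 - t1) = -1024*t1^3 + 6912*t1^4 := by unfold p1; ring
    rw [he]; nlinarith [hcube]
  have hc0 : 0 < tc := by
    rcases le_or_gt t1 (11/108) with h | h
    · have := lt_of_neg ht1 ht14 htc (hneg18 (by linarith))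
      linarith
    · have hneg : p1 t1 0 < 0 := by
        have he : p1 t1 0 = (108*t1 - 11)*(4*t1-1)^3 := by unfold p1; ring
        rw [he]
        have h1 : 0 < 108*t1 - 11 := by linarith
        have h2 : (4*t1-1)^3 < 0 := Odd.pow_neg (by decide) (by linarith)
        exact mul_neg_of_pos_of_neg h1 h2
      exact lt_of_neg ht1 ht14 htc hneg
  have hcc : 1/8 - t1 < tc := by
    rcases le_or_gt t1 (9/64) with h | h
    · exact lt_of_neg ht1 ht14 htc (hneg18 h)
    · linarith
  have hc8 : tc < 1/8 := by
    by_contra hcon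
    push_neg at hcon
    have hid : p1 t1 tc = (1728*t1^2 - 5888*t1^3 + 6912*t1^4)
        + (3456*t1 - 768*t1^2)*(tc - 1/8) + (1728 + 12288*t1)*(tc - 1/8)^2
        + 8192*(tc - 1/8)^3 := by unfold p1; ring
    have hq : 0 < 1728 - 5888*t1 + 6912*t1^2 := by nlinarith [sq_nonneg (54*t1 - 23)]
    have h1 : 0 < 1728*t1^2 - 5888*t1^3 + 6912*t1^4 := by
      nlinarith [mul_pos (mul_pos ht1 ht1) hq]
    have h2 : 0 ≤ (3456*t1 - 768*t1^2)*(tc - 1/8) :=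
      mul_nonneg (by nlinarith) (by linarith)
    have h3 : 0 ≤ (1728 + 12288*t1)*(tc - 1/8)^2 := mul_nonneg (by linarith) (sq_nonneg _)
    have h4 : 0 ≤ 8192*(tc - 1/8)^3 := by
      have h5 : (0:ℝ) ≤ (tc - 1/8)^3 := pow_nonneg (by linarith) 3
      linarith
    have := hid.symm.trans hroot
    linarith
  -- Step 2: the key branch inequality (1-4t1)^2 ≤ 8 tc
  have hkey : (1 - 4*t1)^2 ≤ 8*tc := by
    have hC : 27*(1-4*t1)^4 + 16*(8*tc)^3 - 48*(1-4*t1)*(8*tc)^2 - 6*(1-4*t1)^2*(8*tc)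
        - 16*(1-4*t1)^3 + 27*(8*tc)^2 = 0 := by
      have h0 : p1 t1 tc = 0 := hroot
      unfold p1 at h0
      linear_combination h0
    have := core1 (u := 1-4*t1) (w := 8*tc) (by linarith) (by linarith) (by linarith)
      (by linarith) hC
    linarith
  -- Step 3: strict monotonicity of τ ↦ p1 τ tc on [t1, t1']
  have hfun : (fun τ : ℝ => p1 τ tc) = fun τ : ℝ =>
      6912*τ^4 - 5888*τ^3 + (1824-768*tc)*τ^2 + (12288*tc^2+384*tc-240)*τ
      + (8192*tc^3-1344*tc^2-48*tc+11) := by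
    funext τ; unfold p1; ring
  have hderiv : ∀ τ : ℝ, HasDerivAt (fun τ : ℝ => p1 τ tc)
      (27648*τ^3 - 17664*τ^2 + (3648 - 1536*tc)*τ + (12288*tc^2+384*tc-240)) τ := by
    intro τ
    rw [hfun]
    have h4 : HasDerivAt (fun x:ℝ => 6912*x^4) (6912*((4:ℕ)*τ^3)) τ :=
      (hasDerivAt_pow 4 τ).const_mul 6912
    have h3 : HasDerivAt (fun x:ℝ => 5888*x^3) (5888*((3:ℕ)*τ^2)) τ :=
      (hasDerivAt_pow 3 τ).const_mul 5888
    have h2 : HasDerivAt (fun x:ℝ => (1824-768*tc)*x^2) ((1824-768*tc)*((2:ℕ)*τ^1)) τ :=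
      (hasDerivAt_pow 2 τ).const_mul (1824-768*tc)
    have h1 : HasDerivAt (fun x:ℝ => (12288*tc^2+384*tc-240)*x) ((12288*tc^2+384*tc-240)*1) τ :=
      (hasDerivAt_id τ).const_mul (12288*tc^2+384*tc-240)
    have h5 := (((h4.sub h3).add h2).add h1).add_const (8192*tc^3-1344*tc^2-48*tc+11)
    refine h5.congr_deriv ?_
    push_cast; ring
  have hDpos : ∀ x ∈ Set.Ioo t1 t1', 0 < 27648*x^3 - 17664*x^2 + (3648 - 1536*tc)*x
      + (12288*tc^2+384*tc-240) := by
    intro x hx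
    obtain ⟨hx1, hx2⟩ := hx
    have hu0 : 0 < 1 - 4*x := by linarith
    have h1 : (1-4*x)^2 ≤ 8*tc := by nlinarith
    have h2 : 0 ≤ (8*tc - (1-4*x)^2) * (1536*tc + 192*(1-4*x)^2 + 48*(1-4*x)) := by
      apply mul_nonneg (by linarith)
      nlinarith [sq_nonneg (1-4*x)]
    have h3 : 0 < (1-4*x)^2 * (4*x)^2 :=
      mul_pos (pow_pos hu0 2) (pow_pos (by linarith : (0:ℝ) < 4*x) 2)
    nlinarith [h2, h3]
  have hmono : StrictMonoOn (fun τ : ℝ => p1 τ tc) (Set.Icc t1 t1') := by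
    apply strictMonoOn_of_deriv_pos (convex_Icc t1 t1')
    · rw [hfun]; fun_prop
    · intro x hx
      rw [interior_Icc] at hx
      rw [(hderiv x).deriv]
      exact hDpos x hx
  have hA : 0 < p1 t1' tc := by
    have h1 := hmono (Set.left_mem_Icc.2 h12.le) (Set.right_mem_Icc.2 h12.le) h12
    simp only at h1
    linarith [hroot, h1]
  -- Step 4: derivative of p1 t1 at tc is nonnegative
  have hApos : 0 ≤ 24576*tc^2 + 384*(64*t1-7)*tc - 48*(1-4*t1)^2 := by
    obtain ⟨A, hAdef⟩ : ∃ A : ℝ, A = 24576*tc^2 + 384*(64*t1-7)*tc - 48*(1-4*t1)^2 := ⟨_, rfl⟩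
    obtain ⟨Bq, hBdef⟩ : ∃ B : ℝ, B = 24576*tc + 192*(64*t1-7) := ⟨_, rfl⟩
    rw [← hAdef]
    by_contra hcon
    push_neg at hcon
    obtain ⟨M, hMdef⟩ : ∃ M : ℝ, M = max Bq 0 + 8193 := ⟨_, rfl⟩
    have hM0 : 0 < M := by
      rw [hMdef]; linarith [le_max_right Bq 0]
    have hBM : Bq ≤ M - 8193 := by
      rw [hMdef]; linarith [le_max_left Bq 0]
    obtain ⟨h0, hh0def⟩ : ∃ h0 : ℝ, h0 = min 1 (-A/(2*M)) := ⟨_, rfl⟩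
    have hh0pos : 0 < h0 := by
      rw [hh0def]
      apply lt_min one_pos
      apply div_pos (by linarith) (by linarith)
    have hh01 : h0 ≤ 1 := hh0def ▸ min_le_left _ _
    have hh0A : h0 ≤ -A/(2*M) := hh0def ▸ min_le_right _ _
    have hMeq : M * (-A/(2*M)) = -A/2 := by
      field_simp
    have hMh : M*h0 ≤ -A/2 := by
      calc M*h0 ≤ M*(-A/(2*M)) := mul_le_mul_of_nonneg_left hh0A hM0.le
        _ = -A/2 := hMeq
    have hval : p1 t1 (tc + h0) = A*h0 + Bq*h0^2 + 8192*h0^3 := by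
      have hident : p1 t1 (tc + h0) = p1 t1 tc + A*h0 + Bq*h0^2 + 8192*h0^3 := by
        rw [hAdef, hBdef]; unfold p1; ring
      rw [hident, hroot]; ring
    have hposval : 0 < p1 t1 (tc + h0) := p1_pos_of_gt ht1 ht14 htc _ (by linarith)
    have hcube2 : h0^3 ≤ h0^2 := by nlinarith [mul_pos hh0pos hh0pos]
    have hBqh : Bq*h0^2 ≤ (M - 8193)*h0^2 :=
      mul_le_mul_of_nonneg_right hBM (sq_nonneg h0)
    have hMh2 : (M-1)*h0^2 ≤ (-A/2)*h0 := by
      have ha1 : (M-1)*h0^2 ≤ M*h0^2 := by nlinarith [sq_nonneg h0]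
      have ha3 : (M*h0)*h0 ≤ (-A/2)*h0 := mul_le_mul_of_nonneg_right hMh hh0pos.le
      nlinarith [ha1, ha3]
    have hAh0 : A*h0 < 0 := mul_neg_of_neg_of_pos hcon hh0pos
    have e1 : 8192*h0^3 ≤ 8192*h0^2 := by linarith
    linarith [hval, hposval, hBqh, e1, hMh2, hAh0]
  -- Step 5: conclude
  by_contra hfin
  push_neg at hfin  -- tc ≤ tc'
  have hd : 0 ≤ tc' - tc := by linarith
  have hA' : 0 < 24576*tc^2 + 384*(64*t1'-7)*tc - 48*(1-4*t1')^2 := by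
    nlinarith [mul_pos (sub_pos.2 h12) (by linarith : (0:ℝ) < 24576*tc + 192*(2-4*t1-4*t1'))]
  have hB' : 0 < 24576*tc + 192*(64*t1'-7) := by
    nlinarith [sq_nonneg (t1 - 1/8)]
  have hfinal : p1 t1' tc' = p1 t1' tc
      + (24576*tc^2 + 384*(64*t1'-7)*tc - 48*(1-4*t1')^2)*(tc'-tc)
      + (24576*tc + 192*(64*t1'-7))*(tc'-tc)^2 + 8192*(tc'-tc)^3 := by
    unfold p1; ring
  have h1 : 0 ≤ (24576*tc^2 + 384*(64*t1'-7)*tc - 48*(1-4*t1')^2)*(tc'-tc) :=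
    mul_nonneg hA'.le hd
  have h2 : 0 ≤ (24576*tc + 192*(64*t1'-7))*(tc'-tc)^2 := mul_nonneg hB'.le (sq_nonneg _)
  have h3 : 0 ≤ 8192*(tc'-tc)^3 := by positivity
  have := hfinal.symm.trans hroot'
  linarith
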